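/- Let μ₁, μ₂, μ₃ ∈ ℝ with μ₃ > 0. Define the 3×3 matrix Ĝ = (1/√μ₃) · [[1, 0, μ₁],[0, 1, μ₂],[0, 0, μ₃]] and the 6×6 block-diagonal matrix G = diag(Ĝ, Ĝ). Then Gᵀ (μ₁A₁^co + μ₂A₂^co + μ₃A₃^co) G = A₃^co. (This is the transform used in the localization procedure to turn the boundary matrix of the localized Maxwell system into the constant matrix A₃^co.) -/

import Mathlib

open Matrix

noncomputable section

/-- The matrices `J₁, J₂, J₃`. -/
def Jmat : Fin 3 → Matrix (Fin 3) (Fin 3) ℝ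
  | 0 => !![0,0,0; 0,0,-1; 0,1,0]
  | 1 => !![0,0,1; 0,0,0; -1,0,0]
  | 2 => !![0,-1,0; 1,0,0; 0,0,0]

/-- The block matrices `A_j^co = [[0, −J_j],[J_j, 0]]`. -/
def Aco (j : Fin 3) : Matrix (Fin 6) (Fin 6) ℝ :=
  Matrix.reindex finSumFinEquiv finSumFinEquiv
    (Matrix.fromBlocks 0 (-(Jmat j)) (Jmat j) 0)

/-- The matrix `Ĝ = (1/√μ₃)·[[1,0,μ₁],[0,1,μ₂],[0,0,μ₃]]`. -/
def Ghat (μ1 μ2 μ3 : ℝ) : Matrix (Fin 3) (Fin 3) ℝ :=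
  (Real.sqrt μ3)⁻¹ • !![1, 0, μ1; 0, 1, μ2; 0, 0, μ3]

/-- The block diagonal matrix `G = diag(Ĝ, Ĝ)`. -/
def Gmat (μ1 μ2 μ3 : ℝ) : Matrix (Fin 6) (Fin 6) ℝ :=
  Matrix.reindex finSumFinEquiv finSumFinEquiv
    (Matrix.fromBlocks (Ghat μ1 μ2 μ3) 0 0 (Ghat μ1 μ2 μ3))

lemma key_localization (μ1 μ2 μ3 : ℝ) (hμ3 : 0 < μ3) :
    (Ghat μ1 μ2 μ3)ᵀ * (μ1 • Jmat 0 + μ2 • Jmat 1 + μ3 • Jmat 2) * Ghat μ1 μ2 μ3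
      = Jmat 2 := by
  have hs : Real.sqrt μ3 ≠ 0 := ne_of_gt (Real.sqrt_pos.mpr hμ3)
  have h2 : Real.sqrt μ3 * Real.sqrt μ3 = μ3 := Real.mul_self_sqrt hμ3.le
  ext i j
  fin_cases i <;> fin_cases j <;>
    simp [Ghat, Jmat, mul_apply, Fin.sum_univ_three, Matrix.transpose_apply,
      Matrix.vecHead, Matrix.vecTail] <;>
    field_simp <;>
    first
      | nlinarith [h2]
      | exact Or.inl (by linear_combination (-μ2) * h2)
      | exact Or.inl (by linear_combination μ1 * h2)
      | exact Or.inl (by ring)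

/-- the localization transform `G` turns the boundary matrix
`μ₁A₁^co + μ₂A₂^co + μ₃A₃^co` into the constant matrix `A₃^co`. -/
theorem localization_transform (μ1 μ2 μ3 : ℝ) (hμ3 : 0 < μ3) :
    (Gmat μ1 μ2 μ3)ᵀ * (μ1 • Aco 0 + μ2 • Aco 1 + μ3 • Aco 2) * Gmat μ1 μ2 μ3
      = Aco 2 := by
  set Gh := Ghat μ1 μ2 μ3 with hGh
  set B := μ1 • Jmat 0 + μ2 • Jmat 1 + μ3 • Jmat 2 with hB
  have hsum : μ1 • Aco 0 + μ2 • Aco 1 + μ3 • Aco 2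
      = Matrix.reindex finSumFinEquiv finSumFinEquiv (Matrix.fromBlocks 0 (-B) B 0) := by
    simp only [Aco, hB, reindex_apply]
    ext i j
    cases hi : (finSumFinEquiv.symm i : Fin 3 ⊕ Fin 3) <;>
      cases hj : (finSumFinEquiv.symm j : Fin 3 ⊕ Fin 3) <;>
      simp [Matrix.fromBlocks, hi, hj] <;> ring
  rw [hsum]
  show (reindex finSumFinEquiv finSumFinEquiv (fromBlocks Gh 0 0 Gh))ᵀ *
      reindex finSumFinEquiv finSumFinEquiv (fromBlocks 0 (-B) B 0) *
      reindex finSumFinEquiv finSumFinEquiv (fromBlocks Gh 0 0 Gh) = Aco 2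
  rw [Matrix.transpose_reindex]
  simp only [reindex_apply, Matrix.submatrix_mul_equiv]
  rw [Matrix.fromBlocks_transpose, Matrix.fromBlocks_multiply, Matrix.fromBlocks_multiply]
  simp only [Matrix.mul_zero, Matrix.zero_mul, Matrix.transpose_zero, add_zero, zero_add,
    Matrix.mul_neg, Matrix.neg_mul, neg_zero]
  have hk : Ghᵀ * B * Gh = Jmat 2 := key_localization μ1 μ2 μ3 hμ3
  rw [Aco, reindex_apply, hk]
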